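/- For all real x, y, z and all α ∈ (0,1], |x|^α + |y|^α + |z|^α + |x+y+z|^α ≥ |x+y|^α + |y+z|^α + |z+x|^α. -/

import Mathlib

open Set
open scoped NNReal

private lemma convexOn_rpow_nonpos {p : ℝ} (hp : p ≤ 0) :
    ConvexOn ℝ (Set.Ioi (0:ℝ)) fun t : ℝ => t ^ p := by
  have hI : interior (Set.Ioi (0:ℝ)) = Set.Ioi 0 := interior_Ioi
  refine convexOn_of_hasDerivWithinAt2_nonneg (f' := fun t => p * t ^ (p-1))
    (f'' := fun t => p * ((p-1) * t ^ (p-2))) (convex_Ioi 0) ?_ ?_ ?_ ?_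
  · intro t ht
    exact (Real.continuousAt_rpow_const t p (Or.inl (ne_of_gt ht))).continuousWithinAt
  · intro t ht
    rw [hI] at ht ⊢
    exact (Real.hasDerivAt_rpow_const (Or.inl (ne_of_gt ht))).hasDerivWithinAt
  · intro t ht
    rw [hI] at ht ⊢
    have h := ((Real.hasDerivAt_rpow_const (p := p - 1)
      (Or.inl (ne_of_gt ht))).const_mul p).hasDerivWithinAt (s := Set.Ioi 0)
    rw [show p - 1 - 1 = p - 2 by ring] at h
    exact h
  · intro t ht
    rw [hI] at ht
    have h1 : (0:ℝ) < t ^ (p-2) := Real.rpow_pos_of_pos ht _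
    show 0 ≤ p * ((p-1) * t ^ (p-2))
    have h2 : 0 ≤ p * (p - 1) := mul_nonneg_of_nonpos_of_nonpos hp (by linarith)
    nlinarith [mul_nonneg h2 h1.le]

private lemma pair_le {p : ℝ} (hcv : ConvexOn ℝ (Set.Ioi (0:ℝ)) fun t : ℝ => t ^ p)
    {a q r s : ℝ} (ha : 0 < a) (haq : a ≤ q) (har : a ≤ r) (hsum : a + s = q + r) :
    q ^ p + r ^ p ≤ a ^ p + s ^ p := by
  have hqs : q ≤ s := by linarith
  have hrs : r ≤ s := by linarith
  have has : a ≤ s := le_trans haq hqs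
  rcases has.lt_or_eq with h | h
  · have hsa : 0 < s - a := by linarith
    have hspos : 0 < s := lt_trans ha h
    set lam : ℝ := (s - q) / (s - a) with hlam
    set mu : ℝ := (q - a) / (s - a) with hmu
    have lam0 : 0 ≤ lam := div_nonneg (by linarith) hsa.le
    have mu0 : 0 ≤ mu := div_nonneg (by linarith) hsa.le
    have hsum1 : lam + mu = 1 := by
      rw [hlam, hmu, ← add_div]
      field_simp; ring
    have hq : lam * a + mu * s = q := by
      rw [hlam, hmu]; field_simp; ring
    have hr : mu * a + lam * s = r := by
      rw [hlam, hmu]; field_simp; nlinarith [hsum]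
    have h1 := hcv.2 (Set.mem_Ioi.2 ha) (Set.mem_Ioi.2 hspos) lam0 mu0 hsum1
    have h2 := hcv.2 (Set.mem_Ioi.2 ha) (Set.mem_Ioi.2 hspos) mu0 lam0 (by linarith)
    simp only [smul_eq_mul] at h1 h2
    rw [hq] at h1
    rw [hr] at h2
    have e1 : lam * a ^ p + mu * a ^ p = a ^ p := by rw [← add_mul, hsum1, one_mul]
    have e2 : lam * s ^ p + mu * s ^ p = s ^ p := by rw [← add_mul, hsum1, one_mul]
    linarith [h1, h2, e1, e2]
  · have hq : q = a := le_antisymm (by linarith) haq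
    have hr : r = a := le_antisymm (by linarith) har
    rw [hq, hr, ← h]

private lemma subadd {α : ℝ} (hα0 : 0 < α) (hα1 : α ≤ 1) {a b : ℝ}
    (ha : 0 ≤ a) (hb : 0 ≤ b) : (a + b) ^ α ≤ a ^ α + b ^ α := by
  have h := NNReal.rpow_add_le_add_rpow (⟨a, ha⟩ : ℝ≥0) (⟨b, hb⟩ : ℝ≥0) hα0.le hα1
  have h2 := NNReal.coe_le_coe.2 h
  push_cast at h2
  exact h2

private lemma core {α : ℝ} (hα0 : 0 < α) (hα1 : α ≤ 1) {a b c : ℝ}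
    (ha : 0 ≤ a) (hb : 0 ≤ b) (hc : 0 ≤ c) :
    (a+b)^α + (b+c)^α + (c+a)^α ≤ a^α + b^α + c^α + (a+b+c)^α := by
  have hcv := convexOn_rpow_nonpos (show α - 1 ≤ 0 by linarith)
  have split : ∀ t : ℝ, 0 ≤ t → t ^ α = t * t ^ (α - 1) := by
    intro t ht
    rcases ht.lt_or_eq with h | h
    · rw [show α = 1 + (α - 1) by ring, Real.rpow_add h, Real.rpow_one]
      ring_nf
    · rw [← h, Real.zero_rpow hα0.ne', zero_mul]
  have key : ∀ u v w : ℝ, 0 < u → 0 ≤ v → 0 ≤ w →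
      (u+v)^(α-1) + (u+w)^(α-1) ≤ u^(α-1) + (u+v+w)^(α-1) := by
    intro u v w hu hv hw
    exact pair_le hcv hu (by linarith) (by linarith) (by ring)
  have Ia : a * (a+b)^(α-1) + a * (c+a)^(α-1)
      ≤ a * a^(α-1) + a * (a+b+c)^(α-1) := by
    rcases ha.lt_or_eq with h | h
    · have hk := key a b c h hb hc
      rw [show a + c = c + a by ring] at hk
      nlinarith [mul_le_mul_of_nonneg_left hk h.le]
    · rw [← h]; simp
  have Ib : b * (a+b)^(α-1) + b * (b+c)^(α-1)
      ≤ b * b^(α-1) + b * (a+b+c)^(α-1) := by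
    rcases hb.lt_or_eq with h | h
    · have hk := key b a c h ha hc
      rw [show b + a = a + b by ring] at hk
      nlinarith [mul_le_mul_of_nonneg_left hk h.le]
    · rw [← h]; simp
  have Ic : c * (c+a)^(α-1) + c * (b+c)^(α-1)
      ≤ c * c^(α-1) + c * (a+b+c)^(α-1) := by
    rcases hc.lt_or_eq with h | h
    · have hk := key c a b h ha hb
      rw [show c + b = b + c by ring] at hk
      rw [show c + a + b = a + b + c by ring] at hk
      nlinarith [mul_le_mul_of_nonneg_left hk h.le]
    · rw [← h]; simp
  rw [split (a+b) (by linarith), split (b+c) (by linarith), split (c+a) (by linarith),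
      split a ha, split b hb, split c hc, split (a+b+c) (by linarith)]
  nlinarith [Ia, Ib, Ic]

private lemma main_lemma (α : ℝ) (hα0 : 0 < α) (hα1 : α ≤ 1) (x y z : ℝ)
    (hx : 0 ≤ x) (hy : 0 ≤ y) :
    |x + y| ^ α + |y + z| ^ α + |z + x| ^ α ≤
      |x| ^ α + |y| ^ α + |z| ^ α + |x + y + z| ^ α := by
  rcases le_or_gt 0 z with hz | hz
  · rw [abs_of_nonneg hx, abs_of_nonneg hy, abs_of_nonneg hz,
      abs_of_nonneg (by linarith : (0:ℝ) ≤ x + y),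
      abs_of_nonneg (by linarith : (0:ℝ) ≤ y + z),
      abs_of_nonneg (by linarith : (0:ℝ) ≤ z + x),
      abs_of_nonneg (by linarith : (0:ℝ) ≤ x + y + z)]
    exact core hα0 hα1 hx hy hz
  · rcases le_or_gt 0 (x + y + z) with hs | hs
    · rcases le_or_gt 0 (x + z) with h1 | h1
      · rcases le_or_gt 0 (y + z) with h2 | h2
        · -- A : both nonneg
          rw [abs_of_nonneg hx, abs_of_nonneg hy, abs_of_nonpos hz.le,
            abs_of_nonneg (by linarith : (0:ℝ) ≤ x + y),
            abs_of_nonneg h2, abs_of_nonneg (by linarith : (0:ℝ) ≤ z + x),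
            abs_of_nonneg hs]
          have H1 : (y+z)^α ≤ y^α := Real.rpow_le_rpow h2 (by linarith) hα0.le
          have H2 : (z+x)^α ≤ x^α :=
            Real.rpow_le_rpow (by linarith) (by linarith) hα0.le
          have H3 : (x+y)^α ≤ (x+y+z)^α + (-z)^α := by
            have h := subadd hα0 hα1 hs (show (0:ℝ) ≤ -z by linarith)
            rw [show x + y + z + -z = x + y by ring] at h
            exact h
          linarith
        · -- B : y+z < 0 ≤ x+z
          rw [abs_of_nonneg hx, abs_of_nonneg hy, abs_of_nonpos hz.le,
            abs_of_nonneg (by linarith : (0:ℝ) ≤ x + y),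
            abs_of_nonpos h2.le, abs_of_nonneg (by linarith : (0:ℝ) ≤ z + x),
            abs_of_nonneg hs]
          have H1 : (x+y)^α ≤ x^α + y^α := subadd hα0 hα1 hx hy
          have H2 : (-(y+z))^α ≤ (-z)^α :=
            Real.rpow_le_rpow (by linarith) (by linarith) hα0.le
          have H3 : (z+x)^α ≤ (x+y+z)^α :=
            Real.rpow_le_rpow (by linarith) (by linarith) hα0.le
          linarith
      · rcases le_or_gt 0 (y + z) with h2 | h2
        · -- C : x+z < 0 ≤ y+z
          rw [abs_of_nonneg hx, abs_of_nonneg hy, abs_of_nonpos hz.le,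
            abs_of_nonneg (by linarith : (0:ℝ) ≤ x + y),
            abs_of_nonneg h2, abs_of_nonpos (show z + x ≤ 0 by linarith),
            abs_of_nonneg hs]
          have H1 : (x+y)^α ≤ x^α + y^α := subadd hα0 hα1 hx hy
          have H2 : (-(z+x))^α ≤ (-z)^α :=
            Real.rpow_le_rpow (by linarith) (by linarith) hα0.le
          have H3 : (y+z)^α ≤ (x+y+z)^α :=
            Real.rpow_le_rpow (by linarith) (by linarith) hα0.le
          linarith
        · -- D : x+z < 0, y+z < 0, 0 ≤ x+y+z
          rw [abs_of_nonneg hx, abs_of_nonneg hy, abs_of_nonpos hz.le,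
            abs_of_nonneg (by linarith : (0:ℝ) ≤ x + y),
            abs_of_nonpos h2.le, abs_of_nonpos (show z + x ≤ 0 by linarith),
            abs_of_nonneg hs]
          have H1 : (x+y)^α ≤ (x+y+z)^α + (-z)^α := by
            have h := subadd hα0 hα1 hs (show (0:ℝ) ≤ -z by linarith)
            rw [show x + y + z + -z = x + y by ring] at h
            exact h
          have H2 : (-(y+z))^α ≤ x^α :=
            Real.rpow_le_rpow (by linarith) (by linarith) hα0.le
          have H3 : (-(z+x))^α ≤ y^α :=
            Real.rpow_le_rpow (by linarith) (by linarith) hα0.le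
          linarith
    · -- E : x+y+z < 0
      have hxz : x + z ≤ 0 := by linarith
      have hyz : y + z ≤ 0 := by linarith
      rw [abs_of_nonneg hx, abs_of_nonneg hy, abs_of_nonpos hz.le,
        abs_of_nonneg (by linarith : (0:ℝ) ≤ x + y),
        abs_of_nonpos hyz, abs_of_nonpos (show z + x ≤ 0 by linarith), abs_of_nonpos hs.le]
      have h := core hα0 hα1 hx hy (show (0:ℝ) ≤ -(x+y+z) by linarith)
      rw [show y + -(x+y+z) = -(z+x) by ring, show -(x+y+z) + x = -(y+z) by ring,
        show x + y + -(x+y+z) = -z by ring] at h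
      linarith

theorem stmt19 (x y z α : ℝ) (hα0 : 0 < α) (hα1 : α ≤ 1) :
    |x + y| ^ α + |y + z| ^ α + |z + x| ^ α ≤
      |x| ^ α + |y| ^ α + |z| ^ α + |x + y + z| ^ α := by
  rcases le_total 0 x with hx | hx
  · rcases le_total 0 y with hy | hy
    · exact main_lemma α hα0 hα1 x y z hx hy
    · rcases le_total 0 z with hz | hz
      · have h := main_lemma α hα0 hα1 z x y hz hx
        rw [show z + x + y = x + y + z by ring] at h
        linarith
      · have h := main_lemma α hα0 hα1 (-y) (-z) (-x) (by linarith) (by linarith)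
        rw [show -y + -z + -x = -(x+y+z) by ring, show -y + -z = -(y+z) by ring,
          show -z + -x = -(z+x) by ring, show -x + -y = -(x+y) by ring,
          abs_neg, abs_neg, abs_neg, abs_neg, abs_neg, abs_neg, abs_neg] at h
        linarith
  · rcases le_total 0 y with hy | hy
    · rcases le_total 0 z with hz | hz
      · have h := main_lemma α hα0 hα1 y z x hy hz
        rw [show y + z + x = x + y + z by ring] at h
        linarith
      · have h := main_lemma α hα0 hα1 (-z) (-x) (-y) (by linarith) (by linarith)
        rw [show -z + -x + -y = -(x+y+z) by ring, show -z + -x = -(z+x) by ring,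
          show -x + -y = -(x+y) by ring, show -y + -z = -(y+z) by ring,
          abs_neg, abs_neg, abs_neg, abs_neg, abs_neg, abs_neg, abs_neg] at h
        linarith
    · have h := main_lemma α hα0 hα1 (-x) (-y) (-z) (by linarith) (by linarith)
      rw [show -x + -y + -z = -(x+y+z) by ring, show -x + -y = -(x+y) by ring,
        show -y + -z = -(y+z) by ring, show -z + -x = -(z+x) by ring,
        abs_neg, abs_neg, abs_neg, abs_neg, abs_neg, abs_neg, abs_neg] at h
      linarith
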